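/- Let A be a k-algebra, σ a k-algebra automorphism of A, δ a σ-derivation, E = A[x;σ,δ], and n ≥ 0. For a k-linear map f: A^{⊗n} → A ⊗_k A, write f(a_1,…,a_n) = Σ f(a_1,…,a_n)' ⊗ f(a_1,…,a_n)'' and for l, k ≥ 0 define [f, x^l ⊗ x^k]: A^{⊗n} → E ⊗_k E by (a_1,…,a_n) ↦ Σ f(a_1,…,a_n)' x^l ⊗ x^k f(a_1,…,a_n)''. Define θ^n on k-linear maps F: A^{⊗n} → E ⊗_k E by θ^n(F)(a_1,…,a_n) = x▹F(σ⁻¹(a_1),…,σ⁻¹(a_n)) − F(a_1,…,a_n)◃x − Σ_{j=1}^{n} F(a_1,…,a_{j−1},δσ⁻¹(a_j),σ⁻¹(a_{j+1}),…,σ⁻¹(a_n)), where x▹(m⊗n) = xm⊗n and (m⊗n)◃x = m⊗nx. Then θ^n([f, x^l ⊗ x^k]) = [f_1, x^{l+1} ⊗ x^k] − [f_2, x^l ⊗ x^{k+1}] + [f_3, x^l ⊗ x^k], where f_1 = (σ⊗id)∘f∘(σ⁻¹)^{⊗n}, f_2 = (id⊗σ⁻¹)∘f, and f_3 = (δ⊗id)∘f∘(σ⁻¹)^{⊗n}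 + (id⊗δσ⁻¹)∘f − Σ_{j=1}^{n} f∘(id^{⊗(j−1)} ⊗ δσ⁻¹ ⊗ (σ⁻¹)^{⊗(n−j)}). -/
import Mathlib


open scoped TensorProduct
open CategoryTheory

noncomputable section
set_option synthInstance.maxHeartbeats 1000000
set_option maxHeartbeats 1000000

/-- `E` is an Ore extension `A[x; σ, δ]` of `A` (with `σ` an automorphism): `A` embeds in `E`
via `ι`, the powers of `x` form a basis of `E` as a left `A`-module, `x a = σ(a) x + δ(a)`,
and `δ` is a `σ`-derivation. -/
structure IsOreExtension (k : Type) [CommRing k] (A : Type) [Ring A] [Algebra k A]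
    (E : Type) [Ring E] [Algebra k E] (σ : A ≃ₐ[k] A) (δ : A →ₗ[k] A)
    (ι : A →ₐ[k] E) (x : E) : Prop where
  isDerivation : ∀ a b : A, δ (a * b) = δ a * b + σ a * δ b
  commRule : ∀ a : A, x * ι a = ι (σ a) * x + ι (δ a)
  spans : ∀ e : E, ∃ c : ℕ →₀ A, e = c.sum fun i a => ι a * x ^ i
  indep : ∀ c : ℕ →₀ A, (c.sum fun i a => ι a * x ^ i) = 0 → c = 0

section Stmt5

variable (k : Type) [CommRing k] (A : Type) [Ring A] [Algebra k A]
  (E : Type) [Ring E] [Algebra k E] (ι : A →ₐ[k] E) (x : E)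

/-- `a ↦ ι(a) · x^l`. -/
def toL (l : ℕ) : A →ₗ[k] E := (LinearMap.mulRight k (x ^ l)).comp ι.toLinearMap

/-- `a ↦ x^m · ι(a)`. -/
def toR (m : ℕ) : A →ₗ[k] E := (LinearMap.mulLeft k (x ^ m)).comp ι.toLinearMap

/-- `[f, x^l ⊗ x^m] : A^{⊗n} → E ⊗ E`, sending `a` to `Σ f(a)' x^l ⊗ x^m f(a)''`. -/
def bracket {n : ℕ} (f : TensorPower k n A →ₗ[k] A ⊗[k] A) (l m : ℕ) :
    TensorPower k n A →ₗ[k] E ⊗[k] E :=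
  (TensorProduct.map (toL k A E ι x l) (toR k A E ι x m)).comp f

/-- **The key identity for the map `θ`.**  For an Ore extension `E = A[x;σ,δ]` and a
`k`-linear map `f : A^{⊗n} → A ⊗ A`, one has
`θ^n([f, x^l ⊗ x^m]) = [f₁, x^{l+1} ⊗ x^m] − [f₂, x^l ⊗ x^{m+1}] + [f₃, x^l ⊗ x^m]`,
where `θ^n(F)(a) = x ▹ F(σ⁻¹a) − F(a) ◃ x − Σ_j F(a_1, …, δσ⁻¹(a_j), σ⁻¹(a_{j+1}), …)`,
`f₁ = (σ⊗id)∘f∘(σ⁻¹)^{⊗n}`, `f₂ = (id⊗σ⁻¹)∘f`, and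
`f₃ = (δ⊗id)∘f∘(σ⁻¹)^{⊗n} + (id⊗δσ⁻¹)∘f − Σ_j f∘(id^{⊗(j-1)}⊗δσ⁻¹⊗(σ⁻¹)^{⊗(n-j)})`.
Both sides are evaluated on the pure tensors `a₁ ⊗ ⋯ ⊗ aₙ`, which generate `A^{⊗n}`. -/
theorem theta_bracket_identity
    (σ : A ≃ₐ[k] A) (δ : A →ₗ[k] A)
    (hOre : IsOreExtension k A E σ δ ι x)
    (n : ℕ) (f : TensorPower k n A →ₗ[k] A ⊗[k] A) (l m : ℕ) :
    ∀ a : Fin n → A,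
      (TensorProduct.map (LinearMap.mulLeft k x) LinearMap.id)
          ((bracket k A E ι x f l m)
            (PiTensorProduct.tprod k (fun i : Fin n => σ.symm (a i))))
        - (TensorProduct.map LinearMap.id (LinearMap.mulRight k x))
            ((bracket k A E ι x f l m) (PiTensorProduct.tprod k a))
        - ∑ j : Fin n,
            (bracket k A E ι x f l m)
              (PiTensorProduct.tprod k (fun i : Fin n =>
                if (i : ℕ) < (j : ℕ) then a i
                else if i = j then δ (σ.symm (a j))
                else σ.symm (a i))) =
      (TensorProduct.map (toL k A E ι x (l + 1)) (toR k A E ι x m))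
          ((TensorProduct.map σ.toLinearMap LinearMap.id)
            (f (PiTensorProduct.tprod k (fun i : Fin n => σ.symm (a i)))))
        - (TensorProduct.map (toL k A E ι x l) (toR k A E ι x (m + 1)))
            ((TensorProduct.map LinearMap.id σ.symm.toLinearMap)
              (f (PiTensorProduct.tprod k a)))
        + (TensorProduct.map (toL k A E ι x l) (toR k A E ι x m))
            ((TensorProduct.map δ LinearMap.id)
                (f (PiTensorProduct.tprod k (fun i : Fin n => σ.symm (a i))))
              + (TensorProduct.map LinearMap.id (δ.comp σ.symm.toLinearMap))
                  (f (PiTensorProduct.tprod k a))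
              - ∑ j : Fin n,
                  f (PiTensorProduct.tprod k (fun i : Fin n =>
                    if (i : ℕ) < (j : ℕ) then a i
                    else if i = j then δ (σ.symm (a j))
                    else σ.symm (a i)))) := by
  intro a
  have hxr : ∀ c : A, ι c * x = x * ι (σ.symm c) - ι (δ (σ.symm c)) := by
    intro c
    have h := hOre.commRule (σ.symm c)
    rw [σ.apply_symm_apply] at h
    rw [h, add_sub_cancel_right]
  have h1 : (TensorProduct.map (LinearMap.mulLeft k x) LinearMap.id).comp
      (TensorProduct.map (toL k A E ι x l) (toR k A E ι x m))
      = (TensorProduct.map (toL k A E ι x (l+1)) (toR k A E ι x m)).comp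
          (TensorProduct.map σ.toLinearMap LinearMap.id)
        + (TensorProduct.map (toL k A E ι x l) (toR k A E ι x m)).comp
            (TensorProduct.map δ LinearMap.id) := by
    apply TensorProduct.ext'
    intro b c
    simp only [LinearMap.comp_apply, TensorProduct.map_tmul, LinearMap.id_coe, id_eq,
      LinearMap.add_apply, toL, toR, LinearMap.mulLeft_apply, LinearMap.mulRight_apply,
      AlgHom.toLinearMap_apply, AlgEquiv.toLinearMap_apply]
    rw [← mul_assoc, hOre.commRule b, add_mul, mul_assoc, ← pow_succ']
    rw [TensorProduct.add_tmul]
  have h2 : (TensorProduct.map LinearMap.id (LinearMap.mulRight k x)).comp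
      (TensorProduct.map (toL k A E ι x l) (toR k A E ι x m))
      = (TensorProduct.map (toL k A E ι x l) (toR k A E ι x (m+1))).comp
          (TensorProduct.map LinearMap.id σ.symm.toLinearMap)
        - (TensorProduct.map (toL k A E ι x l) (toR k A E ι x m)).comp
            (TensorProduct.map LinearMap.id (δ.comp σ.symm.toLinearMap)) := by
    apply TensorProduct.ext'
    intro b c
    simp only [LinearMap.comp_apply, TensorProduct.map_tmul, LinearMap.id_coe, id_eq,
      LinearMap.sub_apply, toL, toR, LinearMap.mulLeft_apply, LinearMap.mulRight_apply,
      AlgHom.toLinearMap_apply, AlgEquiv.toLinearMap_apply]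
    rw [mul_assoc, hxr c, mul_sub, ← mul_assoc, ← pow_succ]
    rw [TensorProduct.tmul_sub]
  have e1 := LinearMap.congr_fun h1
    (f (PiTensorProduct.tprod k (fun i : Fin n => σ.symm (a i))))
  have e2 := LinearMap.congr_fun h2 (f (PiTensorProduct.tprod k a))
  simp only [LinearMap.comp_apply, LinearMap.add_apply, LinearMap.sub_apply] at e1 e2
  simp only [bracket, LinearMap.comp_apply]
  rw [e1, e2]
  simp only [map_add, map_sub, map_sum]
  abel

end Stmt5
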